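/- arXiv:1710.10347 — 2 statements merged into one kernel-verified Lean document; each statement's English description precedes it below -/
import Mathlib

section
/- (Discrete Łojasiewicz lemma) For every ε > 0 and every K < ∞, μ ∈ (0,1), there exists δ = δ(ε,K,μ) > 0 with the following property. If f : {0,1,...,T} → ℝ is non-increasing, satisfies |f(t)|^{1+μ} ≤ K(f(t-1) - f(t+1)) for all t = 1,...,T-1, and |f(t)| ≤ δ for all t, then ∑_{j=1}^{T} (f(j-1) - f(j))^{1/2} ≤ ε. -/
open Real Finset

noncomputable def lojPhi (θ s : ℝ) : ℝ := if 0 ≤ s then s ^ θ else -((-s) ^ θ)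

noncomputable def lojC (K μ : ℝ) : ℝ :=
  2 * Real.sqrt K / ((1 - μ) / 2) + 2 / (1 - (1 / 2 : ℝ) ^ ((1 - μ) / 2)) + 4

lemma lojPhi_of_nonneg (θ : ℝ) {s : ℝ} (hs : 0 ≤ s) : lojPhi θ s = s ^ θ := if_pos hs

lemma lojPhi_of_neg (θ : ℝ) {s : ℝ} (hs : s < 0) : lojPhi θ s = -((-s) ^ θ) :=
  if_neg (not_le.mpr hs)

lemma lojPhi_neg (θ : ℝ) (hθ : θ ≠ 0) (s : ℝ) : lojPhi θ (-s) = -lojPhi θ s := by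
  rcases lt_trichotomy s 0 with h | h | h
  · rw [lojPhi_of_neg θ h, lojPhi_of_nonneg θ (by linarith : (0:ℝ) ≤ -s), neg_neg]
  · subst h; simp [lojPhi, Real.zero_rpow hθ]
  · rw [lojPhi_of_nonneg θ h.le, lojPhi_of_neg θ (by linarith : -s < 0), neg_neg]

lemma lojPhi_mono {θ : ℝ} (hθ : 0 < θ) : Monotone (lojPhi θ) := by
  intro s t hst
  rcases le_or_gt 0 s with hs | hs
  · rw [lojPhi_of_nonneg θ hs, lojPhi_of_nonneg θ (hs.trans hst)]
    exact Real.rpow_le_rpow hs hst hθ.le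
  · rcases le_or_gt 0 t with ht | ht
    · rw [lojPhi_of_neg θ hs, lojPhi_of_nonneg θ ht]
      exact le_trans (neg_nonpos.mpr (Real.rpow_nonneg (by linarith) θ))
        (Real.rpow_nonneg ht θ)
    · rw [lojPhi_of_neg θ hs, lojPhi_of_neg θ ht]
      exact neg_le_neg (Real.rpow_le_rpow (by linarith) (by linarith) hθ.le)

lemma lojPhi_le {θ s d : ℝ} (hθ : 0 ≤ θ) (h : |s| ≤ d) : lojPhi θ s ≤ d ^ θ := by
  have hd : 0 ≤ d := (abs_nonneg s).trans h
  rcases le_or_gt 0 s with hs | hs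
  · rw [lojPhi_of_nonneg θ hs]
    have hsd : s ≤ d := by have := abs_le.mp h; linarith [this.2]
    exact Real.rpow_le_rpow hs hsd hθ
  · rw [lojPhi_of_neg θ hs]
    exact le_trans (neg_nonpos.mpr (Real.rpow_nonneg (by linarith) θ))
      (Real.rpow_nonneg hd θ)

lemma lojPhi_ge {θ s d : ℝ} (hθ : 0 ≤ θ) (h : |s| ≤ d) : -(d ^ θ) ≤ lojPhi θ s := by
  have hd : 0 ≤ d := (abs_nonneg s).trans h
  rcases le_or_gt 0 s with hs | hs
  · rw [lojPhi_of_nonneg θ hs]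
    exact le_trans (neg_nonpos.mpr (Real.rpow_nonneg hd θ)) (Real.rpow_nonneg hs θ)
  · rw [lojPhi_of_neg θ hs]
    have : (-s) ^ θ ≤ d ^ θ :=
      Real.rpow_le_rpow (by linarith) (by cases abs_le.mp h; linarith) hθ
    linarith

lemma loj_keyA (K μ : ℝ) (hK : 0 < K) (hμ0 : 0 < μ) (hμ1 : μ < 1)
    (x m y : ℝ) (hm0 : 0 ≤ m) (hxm : m ≤ x) (hmy : y ≤ m)
    (hb2 : x - y ≤ 2) (hgrad : m ^ (1 + μ) ≤ K * (x - y)) :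
    Real.sqrt (x - y) ≤ lojC K μ * (lojPhi ((1 - μ) / 2) x - lojPhi ((1 - μ) / 2) y) := by
  have hθ0 : 0 < (1 - μ) / 2 := by linarith
  have hθ1 : (1 - μ) / 2 ≤ 1 := by linarith
  set θ := (1 - μ) / 2 with hθdef
  have hx0 : 0 ≤ x := hm0.trans hxm
  have hc : 0 < 1 - (1/2 : ℝ) ^ θ := by
    have : (1/2 : ℝ) ^ θ < 1 := Real.rpow_lt_one (by norm_num) (by norm_num) hθ0
    linarith
  have hΦ0 : 0 ≤ lojPhi θ x - lojPhi θ y :=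
    sub_nonneg.mpr (lojPhi_mono hθ0 (hmy.trans hxm))
  have hsqK : 0 ≤ Real.sqrt K := Real.sqrt_nonneg K
  have hA0 : 0 ≤ 2 * Real.sqrt K / θ := by positivity
  have hB0 : 0 ≤ 2 / (1 - (1/2:ℝ)^θ) := le_of_lt (by positivity)
  have hCsplit : lojC K μ = 2 * Real.sqrt K / θ + 2 / (1 - (1/2:ℝ)^θ) + 4 := rfl
  have hclose : ∀ t : ℝ, t ≤ lojC K μ →
      Real.sqrt (x - y) ≤ t * (lojPhi θ x - lojPhi θ y) →
      Real.sqrt (x - y) ≤ lojC K μ * (lojPhi θ x - lojPhi θ y) :=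
    fun t htC h => h.trans (mul_le_mul_of_nonneg_right htC hΦ0)
  have hb0 : 0 ≤ x - y := by linarith
  rcases eq_or_lt_of_le hb0 with hb | hb
  · rw [← hb, Real.sqrt_zero]
    have hC0 : 0 ≤ lojC K μ := by rw [hCsplit]; linarith
    exact mul_nonneg hC0 hΦ0
  · have hθμ : θ + μ/2 = 1/2 := by rw [hθdef]; ring
    have hsplit : Real.sqrt (x - y) = (x-y) ^ θ * (x-y) ^ (μ/2) := by
      rw [Real.sqrt_eq_rpow, ← hθμ, Real.rpow_add hb]
    have hbθ0 : 0 ≤ (x-y) ^ θ := Real.rpow_nonneg hb0 _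
    have hbμ : (x-y) ^ (μ/2) ≤ 2 := by
      calc (x-y) ^ (μ/2) ≤ 2 ^ (μ/2) := Real.rpow_le_rpow hb0 hb2 (by linarith)
        _ ≤ 2 ^ (1:ℝ) := Real.rpow_le_rpow_of_exponent_le one_le_two (by linarith)
        _ = 2 := Real.rpow_one 2
    have hs2 : Real.sqrt (x - y) ≤ 2 * (x-y) ^ θ := by
      rw [hsplit]
      calc (x-y)^θ * (x-y)^(μ/2) ≤ (x-y)^θ * 2 := mul_le_mul_of_nonneg_left hbμ hbθ0
        _ = 2 * (x-y)^θ := by ring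
    have h2θ : (2:ℝ) ^ θ ≤ 2 := by
      calc (2:ℝ)^θ ≤ 2^(1:ℝ) := Real.rpow_le_rpow_of_exponent_le one_le_two hθ1
        _ = 2 := Real.rpow_one 2
    rcases lt_or_ge y 0 with hy | hy
    · -- case y < 0
      have hφx : lojPhi θ x = x ^ θ := lojPhi_of_nonneg θ hx0
      have hφy : lojPhi θ y = -((-y) ^ θ) := lojPhi_of_neg θ hy
      have hxθ0 : 0 ≤ x ^ θ := Real.rpow_nonneg hx0 _
      have hyθ0 : 0 ≤ (-y) ^ θ := Real.rpow_nonneg (by linarith) _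
      have h2 : (x-y) ^ θ ≤ 2 * (x ^ θ + (-y) ^ θ) := by
        rcases le_total x (-y) with hxy | hxy
        · have hble : x - y ≤ 2 * (-y) := by linarith
          calc (x-y) ^ θ ≤ (2 * (-y)) ^ θ := Real.rpow_le_rpow hb0 hble hθ0.le
            _ = 2 ^ θ * (-y) ^ θ := Real.mul_rpow (by norm_num) (by linarith)
            _ ≤ 2 * (-y) ^ θ := mul_le_mul_of_nonneg_right h2θ hyθ0
            _ ≤ 2 * (x ^ θ + (-y) ^ θ) := by linarith
        · have hble : x - y ≤ 2 * x := by linarith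
          calc (x-y) ^ θ ≤ (2 * x) ^ θ := Real.rpow_le_rpow hb0 hble hθ0.le
            _ = 2 ^ θ * x ^ θ := Real.mul_rpow (by norm_num) hx0
            _ ≤ 2 * x ^ θ := mul_le_mul_of_nonneg_right h2θ hxθ0
            _ ≤ 2 * (x ^ θ + (-y) ^ θ) := by linarith
      apply hclose 4 (by rw [hCsplit]; linarith)
      rw [hφx, hφy]
      calc Real.sqrt (x-y) ≤ 2 * (x-y)^θ := hs2
        _ ≤ 2 * (2 * (x^θ + (-y)^θ)) := by linarith
        _ = 4 * (x^θ - -((-y)^θ)) := by ring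
    · -- case 0 ≤ y
      have hφx : lojPhi θ x = x ^ θ := lojPhi_of_nonneg θ hx0
      have hφy : lojPhi θ y = y ^ θ := lojPhi_of_nonneg θ hy
      have hx0' : 0 < x := by linarith
      have hΦxy : 0 ≤ x ^ θ - y ^ θ := sub_nonneg.mpr (Real.rpow_le_rpow hy (by linarith) hθ0.le)
      rcases le_total (2*y) x with hcase | hcase
      · -- y ≤ x/2
        have hyθ : y ^ θ ≤ (1/2:ℝ)^θ * x ^ θ := by
          calc y ^ θ ≤ ((1/2) * x) ^ θ := Real.rpow_le_rpow hy (by linarith) hθ0.le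
            _ = (1/2:ℝ)^θ * x^θ := Real.mul_rpow (by norm_num) hx0
        have hΦx : (1 - (1/2:ℝ)^θ) * x^θ ≤ x^θ - y^θ := by
          have e : (1 - (1/2:ℝ)^θ) * x^θ = x^θ - (1/2:ℝ)^θ * x^θ := by ring
          linarith [e.le, e.ge]
        have hbx : (x-y) ^ θ ≤ x ^ θ := Real.rpow_le_rpow hb0 (by linarith) hθ0.le
        apply hclose (2/(1 - (1/2:ℝ)^θ)) (by rw [hCsplit]; linarith)
        rw [hφx, hφy]
        have hxstep : x^θ ≤ (x^θ - y^θ) / (1 - (1/2:ℝ)^θ) := by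
          rw [le_div_iff₀ hc]
          calc x^θ * (1 - (1/2:ℝ)^θ) = (1 - (1/2:ℝ)^θ) * x^θ := by ring
            _ ≤ x^θ - y^θ := hΦx
        calc Real.sqrt (x-y) ≤ 2 * (x-y)^θ := hs2
          _ ≤ 2 * x^θ := by linarith
          _ ≤ 2 * ((x^θ - y^θ) / (1 - (1/2:ℝ)^θ)) := by linarith
          _ = 2/(1 - (1/2:ℝ)^θ) * (x^θ - y^θ) := by ring
      · -- x ≤ 2y
        have hy0 : 0 < y := by linarith
        have hm0' : 0 < m := lt_of_lt_of_le hy0 hmy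
        have hν0 : (0:ℝ) ≤ 1 - θ := by linarith
        have hamgm : x ^ (1-θ) * y ^ θ ≤ (1-θ) * x + θ * y :=
          Real.geom_mean_le_arith_mean2_weighted hν0 hθ0.le hx0 hy (by ring)
        have hxpow : x ^ ((1:ℝ)-θ) * x ^ θ = x := by
          rw [← Real.rpow_add hx0']
          norm_num
        have hΦlb : θ * (x - y) ≤ (x ^ θ - y ^ θ) * x ^ ((1:ℝ)-θ) := by
          have e : (x^θ - y^θ) * x^((1:ℝ)-θ) = x^((1:ℝ)-θ)*x^θ - x^((1:ℝ)-θ)*y^θ := by ring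
          rw [e, hxpow]
          have e2 : θ * (x - y) = x - ((1-θ)*x + θ*y) := by ring
          linarith [e2.le, e2.ge, hamgm]
        have hmν : m ^ ((1:ℝ)-θ) ≤ Real.sqrt K * Real.sqrt (x-y) := by
          have e1 : m ^ ((1:ℝ)-θ) = (m ^ (1+μ)) ^ ((1:ℝ)/2) := by
            rw [← Real.rpow_mul hm0]
            congr 1
            rw [hθdef]; ring
          rw [e1]
          calc (m^(1+μ))^((1:ℝ)/2) ≤ (K*(x-y))^((1:ℝ)/2) :=
                Real.rpow_le_rpow (Real.rpow_nonneg hm0 _) hgrad (by norm_num)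
            _ = K^((1:ℝ)/2) * (x-y)^((1:ℝ)/2) := Real.mul_rpow hK.le hb0
            _ = Real.sqrt K * Real.sqrt (x-y) := by
                rw [← Real.sqrt_eq_rpow, ← Real.sqrt_eq_rpow]
        have hmνnn : 0 ≤ m ^ ((1:ℝ)-θ) := Real.rpow_nonneg hm0 _
        have hxν : x ^ ((1:ℝ)-θ) ≤ 2 * (Real.sqrt K * Real.sqrt (x-y)) := by
          calc x ^ ((1:ℝ)-θ) ≤ (2*m) ^ ((1:ℝ)-θ) :=
                Real.rpow_le_rpow hx0 (by linarith) hν0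
            _ = 2^((1:ℝ)-θ) * m^((1:ℝ)-θ) := Real.mul_rpow (by norm_num) hm0
            _ ≤ 2 * m^((1:ℝ)-θ) := by
                have : (2:ℝ)^((1:ℝ)-θ) ≤ 2 := by
                  calc (2:ℝ)^((1:ℝ)-θ) ≤ 2^(1:ℝ) :=
                        Real.rpow_le_rpow_of_exponent_le one_le_two (by linarith)
                    _ = 2 := Real.rpow_one 2
                exact mul_le_mul_of_nonneg_right this hmνnn
            _ ≤ 2 * (Real.sqrt K * Real.sqrt (x-y)) := by linarith
        have hcomb : θ * (x-y) ≤ (x^θ - y^θ) * (2 * (Real.sqrt K * Real.sqrt (x-y))) :=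
          hΦlb.trans (mul_le_mul_of_nonneg_left hxν hΦxy)
        have hsb : 0 < Real.sqrt (x-y) := Real.sqrt_pos.mpr hb
        have hbb : Real.sqrt (x-y) * Real.sqrt (x-y) = x - y := Real.mul_self_sqrt hb0
        apply hclose (2*Real.sqrt K/θ) (by rw [hCsplit]; linarith)
        rw [hφx, hφy, div_mul_eq_mul_div, le_div_iff₀ hθ0]
        have h1 : (Real.sqrt (x-y) * θ) * Real.sqrt (x-y) ≤
            (2*Real.sqrt K*(x^θ - y^θ)) * Real.sqrt (x-y) := by
          have e1 : (Real.sqrt (x-y) * θ) * Real.sqrt (x-y) = θ * (x-y) := by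
            rw [mul_comm (Real.sqrt (x-y)) θ, mul_assoc, hbb]
          have e2 : (2*Real.sqrt K*(x^θ - y^θ)) * Real.sqrt (x-y) =
              (x^θ - y^θ) * (2 * (Real.sqrt K * Real.sqrt (x-y))) := by ring
          rw [e1, e2]; exact hcomb
        exact le_of_mul_le_mul_right h1 hsb

lemma loj_key (K μ : ℝ) (hK : 0 < K) (hμ0 : 0 < μ) (hμ1 : μ < 1)
    (x m y : ℝ) (hxm : m ≤ x) (hmy : y ≤ m)
    (hb2 : x - y ≤ 2) (hgrad : |m| ^ (1 + μ) ≤ K * (x - y)) :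
    Real.sqrt (x - y) ≤ lojC K μ * (lojPhi ((1 - μ) / 2) x - lojPhi ((1 - μ) / 2) y) := by
  have hθne : ((1 - μ) / 2 : ℝ) ≠ 0 := ne_of_gt (by linarith)
  rcases le_or_gt 0 m with hm | hm
  · rw [abs_of_nonneg hm] at hgrad
    exact loj_keyA K μ hK hμ0 hμ1 x m y hm hxm hmy hb2 hgrad
  · have hgrad' : (-m) ^ (1 + μ) ≤ K * (-y - -x) := by
      rw [abs_of_neg hm] at hgrad
      have e : -y - -x = x - y := by ring
      rw [e]; exact hgrad
    have h := loj_keyA K μ hK hμ0 hμ1 (-y) (-m) (-x) (by linarith) (by linarith)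
      (by linarith) (by linarith) hgrad'
    rw [lojPhi_neg _ hθne, lojPhi_neg _ hθne] at h
    have e : -y - -x = x - y := by ring
    rw [e] at h
    have e2 : lojC K μ * (-lojPhi ((1 - μ) / 2) y - -lojPhi ((1 - μ) / 2) x) =
        lojC K μ * (lojPhi ((1 - μ) / 2) x - lojPhi ((1 - μ) / 2) y) := by ring
    rw [e2] at h
    exact h

/-- Discrete Łojasiewicz lemma. -/
theorem discrete_lojasiewicz_lemma (ε K μ : ℝ) (hε : 0 < ε) (hK : 0 < K)
    (hμ0 : 0 < μ) (hμ1 : μ < 1) :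
    ∃ δ > 0, ∀ (T : ℕ) (f : ℕ → ℝ),
      (∀ i j, i ≤ j → j ≤ T → f j ≤ f i) →
      (∀ t, 1 ≤ t → t + 1 ≤ T → |f t| ^ (1 + μ) ≤ K * (f (t - 1) - f (t + 1))) →
      (∀ t, t ≤ T → |f t| ≤ δ) →
      ∑ j ∈ Finset.Icc 1 T, Real.sqrt (f (j - 1) - f j) ≤ ε := by
  have hθ0 : 0 < (1 - μ) / 2 := by linarith
  have hc : 0 < 1 - (1/2 : ℝ) ^ ((1 - μ) / 2) := by
    have : (1/2 : ℝ) ^ ((1 - μ) / 2) < 1 := Real.rpow_lt_one (by norm_num) (by norm_num) hθ0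
    linarith
  have hC4 : 4 ≤ lojC K μ := by
    have h1 : 0 ≤ 2 * Real.sqrt K / ((1 - μ) / 2) := by positivity
    have h2 : 0 ≤ 2 / (1 - (1/2:ℝ)^((1 - μ) / 2)) := le_of_lt (by positivity)
    unfold lojC; linarith
  have hC0 : 0 < lojC K μ := by linarith
  refine ⟨min 1 (min ((ε / (8 * lojC K μ)) ^ ((1:ℝ)/((1 - μ) / 2))) (ε ^ 2 / 8)), ?_, ?_⟩
  · exact lt_min (by norm_num) (lt_min (Real.rpow_pos_of_pos (by positivity) _) (by positivity))
  · intro T f hmono hgrad hbound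
    set δ := min 1 (min ((ε / (8 * lojC K μ)) ^ ((1:ℝ)/((1 - μ) / 2))) (ε ^ 2 / 8)) with hδdef
    have hδ0 : 0 < δ :=
      lt_min (by norm_num) (lt_min (Real.rpow_pos_of_pos (by positivity) _) (by positivity))
    have hδ1 : δ ≤ 1 := min_le_left _ _
    have hδa : δ ≤ (ε / (8 * lojC K μ)) ^ ((1:ℝ)/((1 - μ) / 2)) :=
      le_trans (min_le_right _ _) (min_le_left _ _)
    have hδb : δ ≤ ε ^ 2 / 8 := le_trans (min_le_right _ _) (min_le_right _ _)
    have hδθ : δ ^ ((1 - μ) / 2) ≤ ε / (8 * lojC K μ) := by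
      have h1 : δ ^ ((1 - μ) / 2) ≤ ((ε / (8 * lojC K μ)) ^ ((1:ℝ)/((1 - μ) / 2))) ^ ((1 - μ) / 2) :=
        Real.rpow_le_rpow hδ0.le hδa hθ0.le
      rwa [← Real.rpow_mul (by positivity), one_div_mul_cancel hθ0.ne', Real.rpow_one] at h1
    rcases Nat.eq_zero_or_pos T with hT | hT
    · subst hT
      rw [show Finset.Icc 1 0 = (∅ : Finset ℕ) from Finset.Icc_eq_empty (by omega)]
      simpa using hε.le
    · obtain ⟨S, rfl⟩ : ∃ S, T = S + 1 := ⟨T - 1, by omega⟩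
      set g : ℕ → ℝ := fun j => lojPhi ((1 - μ) / 2) (f j) with hg
      have hgub : ∀ t, t ≤ S + 1 → g t ≤ δ ^ ((1 - μ) / 2) := fun t ht =>
        lojPhi_le hθ0.le (hbound t ht)
      have hglb : ∀ t, t ≤ S + 1 → -(δ ^ ((1 - μ) / 2)) ≤ g t := fun t ht =>
        lojPhi_ge hθ0.le (hbound t ht)
      have hkey : ∀ j ∈ Finset.Icc 1 S,
          Real.sqrt (f (j - 1) - f j) ≤ lojC K μ * (g (j - 1) - g (j + 1)) := by
        intro j hj
        rw [Finset.mem_Icc] at hj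
        obtain ⟨hj1, hjS⟩ := hj
        have h1 : f j ≤ f (j - 1) := hmono _ _ (by omega) (by omega)
        have h2 : f (j + 1) ≤ f j := hmono _ _ (by omega) (by omega)
        have hax := abs_le.mp (hbound (j - 1) (by omega))
        have hay := abs_le.mp (hbound (j + 1) (by omega))
        have hb2 : f (j - 1) - f (j + 1) ≤ 2 := by
          have := hax.2; have := hay.1; linarith
        have hgr := hgrad j hj1 (by omega)
        have hstep : Real.sqrt (f (j - 1) - f j) ≤ Real.sqrt (f (j - 1) - f (j + 1)) :=
          Real.sqrt_le_sqrt (by linarith)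
        exact hstep.trans (loj_key K μ hK hμ0 hμ1 _ _ _ h1 h2 hb2 hgr)
      rw [Finset.sum_Icc_succ_top (by omega : 1 ≤ S + 1)]
      have hlast : Real.sqrt (f (S + 1 - 1) - f (S + 1)) ≤ ε / 2 := by
        have hS1 : S + 1 - 1 = S := by omega
        rw [hS1]
        have h1 := abs_le.mp (hbound S (by omega))
        have h2 := abs_le.mp (hbound (S + 1) le_rfl)
        calc Real.sqrt (f S - f (S + 1)) ≤ Real.sqrt (ε ^ 2 / 4) :=
              Real.sqrt_le_sqrt (by linarith [hδb])
          _ = ε / 2 := by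
              rw [show ε ^ 2 / 4 = (ε / 2) ^ 2 by ring, Real.sqrt_sq (by linarith)]
      have hsum1 : ∑ j ∈ Finset.Icc 1 S, Real.sqrt (f (j - 1) - f j) ≤
          lojC K μ * ∑ j ∈ Finset.Icc 1 S, (g (j - 1) - g (j + 1)) := by
        rw [Finset.mul_sum]
        exact Finset.sum_le_sum hkey
      have htel : ∑ j ∈ Finset.Icc 1 S, (g (j - 1) - g (j + 1)) =
          (g 0 - g S) + (g 1 - g (S + 1)) := by
        rw [← Finset.Ico_add_one_right_eq_Icc, Finset.sum_Ico_eq_sum_range]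
        have hrange : S + 1 - 1 = S := by omega
        rw [hrange]
        have hcongr : ∀ i ∈ Finset.range S, g (1 + i - 1) - g (1 + i + 1) =
            (g i - g (i + 1)) + ((fun k => g (k + 1)) i - (fun k => g (k + 1)) (i + 1)) := by
          intro i _
          have e1 : 1 + i - 1 = i := by omega
          have e2 : 1 + i + 1 = i + 1 + 1 := by omega
          simp only [e1, e2]
          ring
        rw [Finset.sum_congr rfl hcongr, Finset.sum_add_distrib,
          Finset.sum_range_sub' g S, Finset.sum_range_sub' (fun k => g (k + 1)) S]
      have htel_le : (g 0 - g S) + (g 1 - g (S + 1)) ≤ 4 * δ ^ ((1 - μ) / 2) := by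
        have h0 := hgub 0 (by omega)
        have h1 := hgub 1 (by omega)
        have h2 := hglb S (by omega)
        have h3 := hglb (S + 1) le_rfl
        linarith
      have hmain : ∑ j ∈ Finset.Icc 1 S, Real.sqrt (f (j - 1) - f j) ≤ ε / 2 := by
        have step1 : lojC K μ * ∑ j ∈ Finset.Icc 1 S, (g (j - 1) - g (j + 1)) ≤
            lojC K μ * (4 * δ ^ ((1 - μ) / 2)) := by
          rw [htel]
          exact mul_le_mul_of_nonneg_left htel_le hC0.le
        have step2 : lojC K μ * (4 * δ ^ ((1 - μ) / 2)) ≤ ε / 2 := by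
          have h4 : lojC K μ * (4 * δ ^ ((1 - μ) / 2)) ≤ lojC K μ * (4 * (ε / (8 * lojC K μ))) := by
            apply mul_le_mul_of_nonneg_left _ hC0.le
            linarith
          have he : lojC K μ * (4 * (ε / (8 * lojC K μ))) = ε / 2 := by
            field_simp
            ring
          linarith
        linarith
      linarith
end

section
/- Suppose F : ℤ ∩ [s₀, s₁] → ℝ is non-increasing and for all integers j in (s₀, s₁), (F(j) - F(L))^{1+μ} ≤ K (F(j-1) - F(j+1)) where L is such that F(j) ≥ F(L) for all j (F bounded below by its limit value), K > 0, 0 < μ < 1, and F(s₀) - F(L) ≤ δ. Then F(j) - F(L) ≤ C(K,μ) (j - s₀)^{-1/μ} for all integers j ∈ (s₀, s₁]. -/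
set_option maxHeartbeats 1000000 in
/-- Shifted discrete Łojasiewicz decay estimate toward the limit value `FL`. -/
theorem shifted_lojasiewicz_decay (K μ : ℝ) (hK : 0 < K) (hμ0 : 0 < μ) (hμ1 : μ < 1) :
    ∃ δ > 0, ∃ C > 0, ∀ (s₀ s₁ : ℤ) (F : ℤ → ℝ) (FL : ℝ),
      (∀ i j, s₀ ≤ i → i ≤ j → j ≤ s₁ → F j ≤ F i) →
      (∀ j, s₀ ≤ j → j ≤ s₁ → FL ≤ F j) →
      (∀ j, s₀ < j → j < s₁ → (F j - FL) ^ (1 + μ) ≤ K * (F (j - 1) - F (j + 1))) →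
      F s₀ - FL ≤ δ →
      ∀ j, s₀ < j → j ≤ s₁ → F j - FL ≤ C * ((j - s₀ : ℤ) : ℝ) ^ (-(1 / μ)) := by
  have hα1 : 1 < 1 / μ := one_lt_one_div hμ0 hμ1
  set α : ℝ := 1 / μ with hαdef
  have hα0 : 0 < α := by linarith
  have hαμ : α * μ = 1 := by rw [hαdef]; field_simp
  set X : ℝ := 2 * α * 3 ^ (α + 1) * K with hXdef
  have hXpos : 0 < X := by positivity
  set C : ℝ := X ^ α with hCdef
  have hCpos : 0 < C := Real.rpow_pos_of_pos hXpos α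
  have hCμ : C ^ μ = X := by
    rw [hCdef, ← Real.rpow_mul hXpos.le, hαμ, Real.rpow_one]
  -- key elementary inequality
  have hkey : ∀ y : ℝ, 1 ≤ y →
      y ^ (-α) - (y + 2) ^ (-α) ≤ 2 * α * 3 ^ (α + 1) * (y + 2) ^ (-(α + 1)) := by
    intro y hy
    have hy0 : (0:ℝ) < y := by linarith
    have hy2 : (0:ℝ) < y + 2 := by linarith
    set u : ℝ := y / (y + 2) with hudef
    have hu0 : 0 < u := by positivity
    have hu1 : u ≤ 1 := by
      rw [hudef, div_le_one hy2]; linarith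
    -- Bernoulli : 1 + α * (u - 1) ≤ u ^ α
    have hbern : 1 + α * (u - 1) ≤ u ^ α := by
      have := one_add_mul_self_le_rpow_one_add (s := u - 1) (by linarith) hα1.le
      simpa using this
    have huα : u ^ α = y ^ α / (y + 2) ^ α := Real.div_rpow hy0.le hy2.le α
    -- (y+2)^(-α) = u^α * y^(-α)
    have hsplit : (y + 2) ^ (-α) = u ^ α * y ^ (-α) := by
      rw [huα, Real.rpow_neg hy0.le, Real.rpow_neg hy2.le]
      field_simp
    have hypow : 0 < y ^ (-α) := Real.rpow_pos_of_pos hy0 _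
    have h1u : 1 - u = 2 / (y + 2) := by
      rw [hudef]; field_simp; ring
    have step1 : y ^ (-α) - (y + 2) ^ (-α) ≤ 2 * α * y ^ (-(α + 1)) := by
      have h2 : y ^ (-α) - (y + 2) ^ (-α) = y ^ (-α) * (1 - u ^ α) := by
        rw [hsplit]; ring
      have h3 : 1 - u ^ α ≤ α * (1 - u) := by linarith
      have h4 : α * (1 - u) ≤ α * (2 / y) := by
        apply mul_le_mul_of_nonneg_left _ hα0.le
        rw [h1u]
        apply div_le_div_of_nonneg_left (by norm_num) hy0
        linarith
      have h5 : y ^ (-(α + 1)) = y ^ (-α) * y⁻¹ := by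
        rw [show -(α + 1) = -α + (-1) by ring, Real.rpow_add hy0, Real.rpow_neg_one]
      calc y ^ (-α) - (y + 2) ^ (-α) = y ^ (-α) * (1 - u ^ α) := h2
        _ ≤ y ^ (-α) * (α * (2 / y)) := by
            apply mul_le_mul_of_nonneg_left (le_trans h3 h4) hypow.le
        _ = 2 * α * (y ^ (-α) * y⁻¹) := by field_simp
        _ = 2 * α * y ^ (-(α + 1)) := by rw [h5]
    have step2 : y ^ (-(α + 1)) ≤ 3 ^ (α + 1) * (y + 2) ^ (-(α + 1)) := by
      have hA : 0 < y ^ (α + 1) := Real.rpow_pos_of_pos hy0 _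
      have hB : 0 < (y + 2) ^ (α + 1) := Real.rpow_pos_of_pos hy2 _
      have hT : 0 < (3:ℝ) ^ (α + 1) := Real.rpow_pos_of_pos (by norm_num) _
      have hle : (y + 2) ^ (α + 1) ≤ 3 ^ (α + 1) * y ^ (α + 1) := by
        have h6 : (y + 2) ^ (α + 1) ≤ (3 * y) ^ (α + 1) :=
          Real.rpow_le_rpow hy2.le (by linarith) (by linarith)
        rwa [Real.mul_rpow (by norm_num) hy0.le] at h6
      rw [Real.rpow_neg hy0.le, Real.rpow_neg hy2.le]
      rw [inv_eq_one_div, mul_comm, inv_eq_one_div, div_mul_eq_mul_div, one_mul,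
        div_le_div_iff₀ hA hB]
      nlinarith [hle, hA.le, hT.le]
    calc y ^ (-α) - (y + 2) ^ (-α) ≤ 2 * α * y ^ (-(α + 1)) := step1
      _ ≤ 2 * α * (3 ^ (α + 1) * (y + 2) ^ (-(α + 1))) := by
          apply mul_le_mul_of_nonneg_left step2 (by positivity)
      _ = 2 * α * 3 ^ (α + 1) * (y + 2) ^ (-(α + 1)) := by ring
  refine ⟨C * 2 ^ (-α), by positivity, C, hCpos, ?_⟩
  intro s₀ s₁ F FL hmono hlb hrec hδ
  -- main claim by strong induction
  have main : ∀ n : ℕ, s₀ + (n : ℤ) ≤ s₁ → 1 ≤ n →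
      F (s₀ + (n : ℤ)) - FL ≤ C * (n : ℝ) ^ (-α) := by
    intro n
    induction n using Nat.strong_induction_on with
    | _ n ih =>
      intro hns hn1
      match n, hn1 with
      | 1, _ =>
        have h1 : F (s₀ + 1) ≤ F s₀ := hmono s₀ (s₀ + 1) le_rfl (by linarith) (by exact_mod_cast hns)
        have : ((1:ℕ) : ℝ) ^ (-α) = 1 := by norm_num
        rw [this, mul_one]
        have h2 : (2:ℝ) ^ (-α) ≤ 1 :=
          Real.rpow_le_one_of_one_le_of_nonpos (by norm_num) (by linarith)
        push_cast
        nlinarith [hδ, hCpos]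
      | 2, _ =>
        have h1 : F (s₀ + 2) ≤ F s₀ := hmono s₀ (s₀ + 2) le_rfl (by linarith) (by exact_mod_cast hns)
        have : ((2:ℕ) : ℝ) = 2 := by norm_num
        rw [this]
        push_cast
        linarith [hδ]
      | (m + 3), _ =>
        have hcast : (((m : ℤ) + 3) : ℤ) = ((m + 3 : ℕ) : ℤ) := by push_cast; ring
        have hns' : s₀ + (m : ℤ) + 3 ≤ s₁ := by push_cast at hns ⊢; linarith
        -- recursion at j = s₀ + m + 2
        have hr := hrec (s₀ + (m : ℤ) + 2) (by linarith [Int.natCast_nonneg m]) (by omega)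
        have e1 : s₀ + (m : ℤ) + 2 - 1 = s₀ + ((m : ℤ) + 1) := by ring
        have e2 : s₀ + (m : ℤ) + 2 + 1 = s₀ + ((m : ℤ) + 3) := by ring
        rw [e1, e2] at hr
        set b1 : ℝ := F (s₀ + ((m : ℤ) + 1)) - FL with hb1
        set b2 : ℝ := F (s₀ + (m : ℤ) + 2) - FL with hb2
        set b3 : ℝ := F (s₀ + ((m : ℤ) + 3)) - FL with hb3
        have hmn : (0:ℤ) ≤ m := Int.natCast_nonneg m
        have hb3nn : 0 ≤ b3 := by
          have := hlb (s₀ + ((m : ℤ) + 3)) (by linarith) (by linarith)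
          linarith
        have hb32 : b3 ≤ b2 := by
          have := hmono (s₀ + (m : ℤ) + 2) (s₀ + ((m : ℤ) + 3)) (by linarith) (by linarith)
            (by linarith)
          simp only [hb2, hb3]; linarith
        have hr2 : b3 ^ (1 + μ) ≤ K * (b1 - b3) := by
          calc b3 ^ (1 + μ) ≤ b2 ^ (1 + μ) :=
                Real.rpow_le_rpow hb3nn hb32 (by linarith)
            _ ≤ K * (b1 - b3) := by
                have : F (s₀ + ((m : ℤ) + 1)) - F (s₀ + ((m : ℤ) + 3)) = b1 - b3 := by
                  rw [hb1, hb3]; ring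
                rw [← this]; exact hr
        -- induction hypothesis at m + 1
        have hih : b1 ≤ C * ((m + 1 : ℕ) : ℝ) ^ (-α) := by
          have := ih (m + 1) (by omega) (by push_cast; linarith) (by omega)
          have ecast : (s₀ + ((m + 1 : ℕ) : ℤ)) = s₀ + ((m : ℤ) + 1) := by push_cast; ring
          rw [ecast] at this
          exact this
        by_contra hcon
        push_neg at hcon
        set x : ℝ := C * ((m + 3 : ℕ) : ℝ) ^ (-α) with hx
        have hm3pos : (0:ℝ) < ((m + 3 : ℕ) : ℝ) := by positivity
        have hxpos : 0 < x := by positivity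
        have hxb3 : x < b3 := hcon
        -- the key inequality with y = m + 1
        have hy1 : (1:ℝ) ≤ ((m + 1 : ℕ) : ℝ) := by push_cast; linarith [Nat.cast_nonneg (α := ℝ) m]
        have hy2e : ((m + 1 : ℕ) : ℝ) + 2 = ((m + 3 : ℕ) : ℝ) := by push_cast; ring
        have hk := hkey ((m + 1 : ℕ) : ℝ) hy1
        rw [hy2e] at hk
        -- compute x ^ (1 + μ) / K
        have hexp : -α * (1 + μ) = -(α + 1) := by
          rw [neg_mul, mul_add, mul_one, hαμ]
        have hxpow : x ^ (1 + μ) = C * X * ((m + 3 : ℕ) : ℝ) ^ (-(α + 1)) := by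
          rw [hx, Real.mul_rpow hCpos.le (Real.rpow_nonneg hm3pos.le _),
            ← Real.rpow_mul hm3pos.le, hexp, Real.rpow_add hCpos, Real.rpow_one, hCμ]
        have hkC : C * ((m + 1 : ℕ) : ℝ) ^ (-α) ≤ x + x ^ (1 + μ) / K := by
          rw [hxpow, hx]
          have hXK : C * X * ((m + 3 : ℕ) : ℝ) ^ (-(α + 1)) / K
              = C * (2 * α * 3 ^ (α + 1) * ((m + 3 : ℕ) : ℝ) ^ (-(α + 1))) := by
            rw [hXdef]; field_simp
          rw [hXK]
          have h8 := mul_le_mul_of_nonneg_left hk hCpos.le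
          rw [mul_sub] at h8
          linarith
        have h9 : x ^ (1 + μ) ≤ b3 ^ (1 + μ) :=
          Real.rpow_le_rpow hxpos.le hxb3.le (by linarith)
        have hdiv : x ^ (1 + μ) / K ≤ b3 ^ (1 + μ) / K := by gcongr
        have hb1ge : b3 + b3 ^ (1 + μ) / K ≤ b1 := by
          have h7 : b3 ^ (1 + μ) / K ≤ b1 - b3 := by
            rw [div_le_iff₀ hK]; linarith
          linarith
        linarith [hih, hkC, hdiv, hb1ge, hxb3]
  -- conclude
  intro j hj1 hj2
  have hn : j = s₀ + ((j - s₀).toNat : ℤ) := by omega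
  have h1n : 1 ≤ (j - s₀).toNat := by omega
  have := main (j - s₀).toNat (by omega) h1n
  rw [← hn] at this
  have hc : (((j - s₀).toNat : ℕ) : ℝ) = ((j - s₀ : ℤ) : ℝ) := by
    have h10 : (((j - s₀).toNat : ℕ) : ℤ) = j - s₀ := Int.toNat_of_nonneg (by omega)
    exact_mod_cast congrArg (Int.cast : ℤ → ℝ) h10
  rw [hc] at this
  exact this
end
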